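/- Let (c_t)_{t≥1} be nonnegative reals with c_t ≤ 1/t³ for all t ≥ 1. Then for any k ≥ 1, ∑_{t=0}^{k-1} (8(t+1) + 5) · ∏_{j=t+1}^{k} c_j ≤ 50/k², where ∏_{j=t+1}^{k} c_j ≤ 1/(k³(k-1)³···(t+1)³). -/

import Mathlib

theorem stmt_16 (c : ℕ → ℝ) (hc0 : ∀ t, 0 ≤ c t)
    (hc : ∀ t, 1 ≤ t → c t ≤ 1 / (t : ℝ) ^ 3) (k : ℕ) (hk : 1 ≤ k) :
    ∑ t ∈ Finset.range k, (8 * ((t : ℝ) + 1) + 5) * ∏ j ∈ Finset.Icc (t + 1) k, c j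
      ≤ 50 / (k : ℝ) ^ 2 := by
  induction k, hk using Nat.le_induction with
  | base =>
    simp only [Finset.sum_range_one, Finset.Icc_self, Finset.prod_singleton]
    have h1 := hc 1 le_rfl
    have h0 := hc0 1
    norm_num at h1 ⊢
    nlinarith
  | succ k hk ih =>
    have hkR : (1:ℝ) ≤ (k : ℝ) := by exact_mod_cast hk
    have hk1 : (0:ℝ) < (k : ℝ) + 1 := by linarith
    have hck : c (k + 1) ≤ 1 / ((k : ℝ) + 1) ^ 3 := by
      have := hc (k + 1) (by omega)
      push_cast at this
      exact this
    have hprod : ∀ t ∈ Finset.range k,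
        (8 * ((t : ℝ) + 1) + 5) * ∏ j ∈ Finset.Icc (t + 1) (k + 1), c j
        = ((8 * ((t : ℝ) + 1) + 5) * ∏ j ∈ Finset.Icc (t + 1) k, c j) * c (k + 1) := by
      intro t ht
      simp only [Finset.mem_range] at ht
      rw [Finset.prod_Icc_succ_top (by omega : t + 1 ≤ k + 1)]
      ring
    rw [Finset.sum_range_succ, Finset.sum_congr rfl hprod, ← Finset.sum_mul,
      Finset.Icc_self, Finset.prod_singleton]
    have hSnn : (0:ℝ) ≤ ∑ t ∈ Finset.range k,
        (8 * ((t : ℝ) + 1) + 5) * ∏ j ∈ Finset.Icc (t + 1) k, c j := by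
      apply Finset.sum_nonneg
      intro t _
      apply mul_nonneg (by positivity)
      exact Finset.prod_nonneg fun j _ => hc0 j
    have hcknn := hc0 (k + 1)
    have hA : 50 / (k:ℝ)^2 ≤ 50 := by
      rw [div_le_iff₀ (by positivity)]
      nlinarith
    have key : (∑ t ∈ Finset.range k,
          (8 * ((t : ℝ) + 1) + 5) * ∏ j ∈ Finset.Icc (t + 1) k, c j) * c (k + 1)
        + (8 * ((k : ℝ) + 1) + 5) * c (k + 1)
        ≤ (50 * ((k:ℝ) + 1)) * (1 / ((k : ℝ) + 1) ^ 3) := by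
      have h1 : (∑ t ∈ Finset.range k,
          (8 * ((t : ℝ) + 1) + 5) * ∏ j ∈ Finset.Icc (t + 1) k, c j) * c (k + 1)
          + (8 * ((k : ℝ) + 1) + 5) * c (k + 1)
          ≤ (50 * ((k:ℝ) + 1)) * c (k + 1) := by
        nlinarith [ih]
      refine h1.trans ?_
      exact mul_le_mul_of_nonneg_left hck (by positivity)
    refine key.trans ?_
    have : (50 * ((k:ℝ) + 1)) * (1 / ((k : ℝ) + 1) ^ 3) = 50 / ((k:ℝ) + 1) ^ 2 := by
      field_simp
    rw [this]
    push_cast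
    exact le_refl _
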